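/- With T = L + M, R = K + M as above, if R is a Prüfer domain then there is an exact sequence of ideal class groups 1 → C(K) → C(R) → C(T) → 1, where the first map sends the class of a fractional ideal J of K to the class of JR and the second sends the class of I to the class of IT. -/

import Mathlib

section Setup

variable {T : Type*} [CommRing T] [IsDomain T]

/-- The subring `K + M` of `T`, for a subring `K` and an ideal `M` of `T`. -/
def ringR (K : Subring T) (M : Ideal T) : Subring T where
  carrier := {t | ∃ k ∈ K, ∃ m ∈ M, t = k + m}
  one_mem' := ⟨1, K.one_mem, 0, M.zero_mem, by ring⟩
  zero_mem' := ⟨0, K.zero_mem, 0, M.zero_mem, by ring⟩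
  add_mem' := by
    rintro a b ⟨k1, hk1, m1, hm1, rfl⟩ ⟨k2, hk2, m2, hm2, rfl⟩
    exact ⟨k1 + k2, K.add_mem hk1 hk2, m1 + m2, M.add_mem hm1 hm2, by ring⟩
  neg_mem' := by
    rintro a ⟨k, hk, m, hm, rfl⟩
    exact ⟨-k, K.neg_mem hk, -m, M.neg_mem hm, by ring⟩
  mul_mem' := by
    rintro a b ⟨k1, hk1, m1, hm1, rfl⟩ ⟨k2, hk2, m2, hm2, rfl⟩
    refine ⟨k1 * k2, K.mul_mem hk1 hk2, k1 * m2 + m1 * k2 + m1 * m2, ?_, by ring⟩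
    exact M.add_mem (M.add_mem (M.mul_mem_left _ hm2) (M.mul_mem_right _ hm1))
      (M.mul_mem_left _ hm2)

theorem K_le_ringR (K : Subring T) (M : Ideal T) : K ≤ ringR K M :=
  fun k hk => ⟨k, hk, 0, M.zero_mem, (add_zero k).symm⟩

/-- An ideal `A` of `T`, viewed as a module over a subring `S` of `T`. -/
def idealAsMod (S : Subring T) (A : Ideal T) : Submodule ↥S T where
  carrier := A
  add_mem' := fun ha hb => A.add_mem ha hb
  zero_mem' := A.zero_mem
  smul_mem' := fun r a ha => A.mul_mem_left (r : T) ha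

/-- The subring `L` of `T` is a field. -/
def IsFieldSub (L : Subring T) : Prop := ∀ x ∈ L, x ≠ 0 → ∃ y ∈ L, x * y = 1

/-- `T = L ⊕ M` as additive groups: `L` is a retract of `T` with maximal ideal `M`. -/
def DirectSumDecomp (L : Subring T) (M : Ideal T) : Prop :=
  (∀ t : T, ∃ l ∈ L, ∃ m ∈ M, t = l + m) ∧ ∀ x ∈ L, x ∈ M → x = 0

/-- `L` is the field of fractions of `K` (inside `T`). -/
def IsFracOf (K L : Subring T) : Prop :=
  ∀ l ∈ L, ∃ a ∈ K, ∃ b ∈ K, b ≠ 0 ∧ l * b = a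

/-- The module structure on a subring over a smaller subring. -/
noncomputable def modOfLE {K L : Subring T} (h : K ≤ L) : Module ↥K ↥L :=
  ((Subring.inclusion h).toAlgebra).toModule

/-- `T` localized at the prime `M` is a valuation domain. -/
def ValAtPrime (M : Ideal T) (hp : M.IsPrime) : Prop :=
  @ValuationRing (@Localization.AtPrime T _ M hp) _
    (@IsLocalization.isDomain_of_local_atPrime T _ _ M hp)

/-- A Prüfer domain: every nonzero finitely generated ideal is invertible. -/
def IsPruferDomain (A : Type*) [CommRing A] [IsDomain A] : Prop :=
  ∀ I : Ideal A, I ≠ ⊥ → I.FG →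
    IsUnit (I : FractionalIdeal (nonZeroDivisors A) (FractionRing A))

/-- A GCD domain: any two nonzero elements admit a greatest common divisor. -/
def IsGCDDomain (A : Type*) [CommRing A] [IsDomain A] : Prop :=
  ∀ a b : A, a ≠ 0 → b ≠ 0 →
    ∃ g : A, g ∣ a ∧ g ∣ b ∧ ∀ c : A, c ∣ a → c ∣ b → c ∣ g

/-- The algebra structure of the fraction field of `T` over a subring of `T`. -/
noncomputable def algFrac (S : Subring T) : Algebra ↥S (FractionRing T) :=
  ((algebraMap T (FractionRing T)).comp S.subtype).toAlgebra

end Setup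

open scoped nonZeroDivisors

section ExtHom

variable {A B : Type*} [CommRing A] [IsDomain A] [CommRing B] [IsDomain B]
variable (f : A →+* B) (hf : Function.Injective f)

/-- The induced map on fraction fields. -/
noncomputable def extg : FractionRing A →+* FractionRing B :=
  IsFractionRing.lift (g := (RingHom.comp (algebraMap B (FractionRing B)) f))
    ((IsFractionRing.injective B (FractionRing B)).comp hf)

lemma extg_alg (a : A) :
    extg f hf (algebraMap A (FractionRing A) a) = algebraMap B (FractionRing B) (f a) :=
  IsFractionRing.lift_algebraMap _ _

/-- Extension of submodules of the fraction field. -/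
noncomputable def extSub (I : Submodule A (FractionRing A)) : Submodule B (FractionRing B) :=
  Submodule.span B (extg f hf '' I)

lemma extSub_span (s : Set (FractionRing A)) :
    extSub f hf (Submodule.span A s) = Submodule.span B (extg f hf '' s) := by
  apply le_antisymm
  · rw [extSub, Submodule.span_le]
    rintro x ⟨y, hy, rfl⟩
    induction hy using Submodule.span_induction with
    | mem z hz => exact Submodule.subset_span ⟨z, hz, rfl⟩
    | zero => simp only [map_zero]; exact Submodule.zero_mem _
    | add a b _ _ ha hb => rw [RingHom.map_add]; exact Submodule.add_mem _ ha hb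
    | smul a x _ hx =>
        rw [Algebra.smul_def, RingHom.map_mul, extg_alg, ← Algebra.smul_def]
        exact Submodule.smul_mem _ _ hx
  · exact Submodule.span_mono (Set.image_mono Submodule.subset_span)

lemma extSub_mul (I J : Submodule A (FractionRing A)) :
    extSub f hf (I * J) = extSub f hf I * extSub f hf J := by
  conv_lhs => rw [← Submodule.span_eq I, ← Submodule.span_eq J, Submodule.span_mul_span,
    extSub_span, Set.image_mul, ← Submodule.span_mul_span]
  rfl

lemma extSub_one : extSub f hf (1 : Submodule A (FractionRing A)) = 1 := by
  rw [Submodule.one_eq_span, extSub_span, Set.image_singleton, RingHom.map_one, Submodule.one_eq_span]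

/-- Extension of fractional ideals. -/
noncomputable def extFI (I : FractionalIdeal A⁰ (FractionRing A)) :
    FractionalIdeal B⁰ (FractionRing B) := by
  refine ⟨extSub f hf I, ?_⟩
  obtain ⟨a, ha, haI⟩ := I.isFractional
  refine ⟨f a, mem_nonZeroDivisors_of_ne_zero ?_, ?_⟩
  · intro h
    exact nonZeroDivisors.ne_zero ha (hf (by simpa using h))
  · intro x hx
    induction hx using Submodule.span_induction with
    | mem z hz =>
        obtain ⟨y, hy, rfl⟩ := hz
        obtain ⟨c, hc⟩ := haI y hy
        refine ⟨f c, ?_⟩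
        rw [← extg_alg f hf, hc, Algebra.smul_def, map_mul, extg_alg, ← Algebra.smul_def]
    | zero => exact ⟨0, by simp⟩
    | add a b _ _ ha hb =>
        obtain ⟨ca, hca⟩ := ha; obtain ⟨cb, hcb⟩ := hb
        exact ⟨ca + cb, by rw [map_add, smul_add, hca, hcb]⟩
    | smul b x _ hx =>
        obtain ⟨c, hc⟩ := hx
        refine ⟨b * c, ?_⟩
        rw [map_mul, hc, Algebra.smul_def, Algebra.smul_def, Algebra.smul_def]
        ring

@[simp] lemma coe_extFI (I : FractionalIdeal A⁰ (FractionRing A)) :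
    (extFI f hf I : Submodule B (FractionRing B)) = extSub f hf I := rfl

/-- Extension of fractional ideals as a monoid hom. -/
noncomputable def extHom :
    FractionalIdeal A⁰ (FractionRing A) →* FractionalIdeal B⁰ (FractionRing B) where
  toFun := extFI f hf
  map_one' := FractionalIdeal.coeToSubmodule_injective <| by
    show (extFI f hf 1 : Submodule B (FractionRing B)) =
      ((1 : FractionalIdeal B⁰ (FractionRing B)) : Submodule B (FractionRing B))
    rw [coe_extFI, FractionalIdeal.coe_one, extSub_one, FractionalIdeal.coe_one]
  map_mul' I J := FractionalIdeal.coeToSubmodule_injective <| by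
    show (extFI f hf (I * J) : Submodule B (FractionRing B)) =
      ((extFI f hf I * extFI f hf J : FractionalIdeal B⁰ (FractionRing B)) :
        Submodule B (FractionRing B))
    rw [coe_extFI, FractionalIdeal.coe_mul, FractionalIdeal.coe_mul, coe_extFI, coe_extFI,
      extSub_mul]

lemma extHom_coeIdeal (J : Ideal A) :
    extHom f hf (J : FractionalIdeal A⁰ (FractionRing A)) = (J.map f : Ideal B) := by
  apply FractionalIdeal.coeToSubmodule_injective
  show extSub f hf _ = ((J.map f : FractionalIdeal B⁰ (FractionRing B)) :
    Submodule B (FractionRing B))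
  have h1 : IsLocalization.coeSubmodule (FractionRing A) J =
      Submodule.span A (⇑(Algebra.linearMap A (FractionRing A)) '' (J : Set A)) := by
    rw [IsLocalization.coeSubmodule, Submodule.span_image, Submodule.span_eq]
  have h2 : IsLocalization.coeSubmodule (FractionRing B) (J.map f) =
      Submodule.span B (⇑(Algebra.linearMap B (FractionRing B)) '' (⇑f '' (J : Set A))) := by
    have : J.map f = Ideal.span (⇑f '' (J : Set A)) := rfl
    rw [IsLocalization.coeSubmodule, this, Ideal.span, Submodule.map_span]
  rw [FractionalIdeal.coe_coeIdeal, FractionalIdeal.coe_coeIdeal, h1, h2, extSub_span]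
  congr 1
  rw [← Set.image_comp, ← Set.image_comp]
  apply Set.image_congr
  intro a _
  simp only [Function.comp_apply, Algebra.linearMap_apply, extg_alg]

lemma extHom_spanSingleton (x : FractionRing A) :
    extHom f hf (FractionalIdeal.spanSingleton A⁰ x) =
      FractionalIdeal.spanSingleton B⁰ (extg f hf x) := by
  apply FractionalIdeal.coeToSubmodule_injective
  show extSub f hf _ = ((FractionalIdeal.spanSingleton B⁰ (extg f hf x)) :
    Submodule B (FractionRing B))
  rw [FractionalIdeal.coe_spanSingleton, FractionalIdeal.coe_spanSingleton, extSub_span,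
    Set.image_singleton]

/-- The induced map on class groups. -/
noncomputable def classMap : ClassGroup A →* ClassGroup B :=
  QuotientGroup.lift _ ((ClassGroup.mk (FractionRing B)).comp (Units.map (extHom f hf))) <| by
    intro u hu
    obtain ⟨x, rfl⟩ := hu
    rw [MonoidHom.mem_ker, MonoidHom.comp_apply, ClassGroup.mk_eq_one_iff]
    refine ⟨⟨extg f hf x, ?_⟩⟩
    show ((extHom f hf (toPrincipalIdeal A (FractionRing A) x : FractionalIdeal A⁰ (FractionRing A)) : FractionalIdeal B⁰ (FractionRing B)) : Submodule B (FractionRing B)) = _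
    rw [coe_toPrincipalIdeal, extHom_spanSingleton, FractionalIdeal.coe_spanSingleton]

lemma classMap_mk (u : (FractionalIdeal A⁰ (FractionRing A))ˣ) :
    classMap f hf (ClassGroup.mk (FractionRing A) u) = ClassGroup.mk (FractionRing B) (Units.map (extHom f hf) u) := by
  rw [← ClassGroup.Quot_mk_eq_mk]
  rfl

end ExtHom
section IntegralRep

open FractionalIdeal in
/-- Every class contains an invertible integral ideal. -/
lemma exists_integral_rep {A : Type*} [CommRing A] [IsDomain A] (c : ClassGroup A) :
    ∃ (I : Ideal A) (hu : IsUnit (I : FractionalIdeal A⁰ (FractionRing A))),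
      I ≠ ⊥ ∧ c = ClassGroup.mk (FractionRing A) hu.unit := by
  refine ClassGroup.induction (FractionRing A) (fun u => ?_) c
  obtain ⟨a, I, ha, hI⟩ :=
    exists_eq_spanSingleton_mul (u : FractionalIdeal A⁰ (FractionRing A))
  have hs : algebraMap A (FractionRing A) a ≠ 0 :=
    fun h => ha (IsFractionRing.injective A (FractionRing A) (by simpa using h))
  have key : spanSingleton A⁰ (algebraMap A (FractionRing A) a) *
      (u : FractionalIdeal A⁰ (FractionRing A)) = I := by
    rw [hI, ← mul_assoc, spanSingleton_mul_spanSingleton, mul_inv_cancel₀ hs,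
      spanSingleton_one, one_mul]
  have hspan : IsUnit (spanSingleton A⁰ (algebraMap A (FractionRing A) a)) :=
    ⟨toPrincipalIdeal A (FractionRing A) (Units.mk0 _ hs), by
      rw [coe_toPrincipalIdeal]; rfl⟩
  have hu : IsUnit (I : FractionalIdeal A⁰ (FractionRing A)) := by
    rw [← key]; exact hspan.mul u.isUnit
  refine ⟨I, hu, ?_, ?_⟩
  · rintro rfl
    apply u.ne_zero
    simpa using hI
  · rw [ClassGroup.mk_eq_mk]
    refine ⟨Units.mk0 _ hs, Units.ext ?_⟩
    rw [IsUnit.unit_spec, Units.val_mul, coe_toPrincipalIdeal, mul_comm]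
    exact key

end IntegralRep

section DMHelpers

variable {T : Type*} [CommRing T] [IsDomain T] {L K : Subring T} {M : Ideal T}

lemma decomp_unique (hLM : DirectSumDecomp L M) {l₁ m₁ l₂ m₂ : T} (hl₁ : l₁ ∈ L) (hm₁ : m₁ ∈ M)
    (hl₂ : l₂ ∈ L) (hm₂ : m₂ ∈ M) (h : l₁ + m₁ = l₂ + m₂) : l₁ = l₂ ∧ m₁ = m₂ := by
  have h1 : l₁ - l₂ ∈ L := L.sub_mem hl₁ hl₂
  have h2 : l₁ - l₂ ∈ M := by
    have : l₁ - l₂ = m₂ - m₁ := by linear_combination h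
    rw [this]; exact M.sub_mem hm₂ hm₁
  have h3 : l₁ - l₂ = 0 := hLM.2 _ h1 h2
  have h4 : l₁ = l₂ := by linear_combination h3
  exact ⟨h4, by linear_combination h - h3⟩

lemma M_le_R (m : T) (hm : m ∈ M) : m ∈ ringR K M :=
  ⟨0, K.zero_mem, m, hm, by ring⟩

lemma M_div (hL : IsFieldSub L) {x : T} (hx : x ∈ L) (hx0 : x ≠ 0) {m : T} (hm : m ∈ M) :
    ∃ m' ∈ M, m = x * m' := by
  obtain ⟨y, _, hxy⟩ := hL x hx hx0
  exact ⟨y * m, M.mul_mem_left y hm, by rw [← mul_assoc, hxy, one_mul]⟩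

lemma exists_K_denom (hLM : DirectSumDecomp L M) (hfrac : IsFracOf K L) (t : T) :
    ∃ b, b ∈ K ∧ b ≠ 0 ∧ b * t ∈ ringR K M := by
  obtain ⟨l, hl, m, hm, rfl⟩ := hLM.1 t
  obtain ⟨a, ha, b, hb, hb0, hlb⟩ := hfrac l hl
  exact ⟨b, hb, hb0, ⟨a, ha, b * m, M.mul_mem_left b hm, by rw [mul_add, ← hlb]; ring⟩⟩

end DMHelpers
section DMHelpers2

variable {T : Type*} [CommRing T] [IsDomain T] {L K : Subring T} {M : Ideal T}

lemma incl_coe (h : K ≤ ringR K M) (x : ↥K) :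
    ((Subring.inclusion h x : ↥(ringR K M)) : T) = (x : T) := rfl

lemma incl_injective (h : K ≤ ringR K M) :
    Function.Injective (Subring.inclusion h) := fun a b hab =>
  Subtype.ext (by rw [← incl_coe h a, ← incl_coe h b, hab])

/-- The key description of the extension of an ideal of `K` to `R = K + M`. -/
lemma mem_map_inclusion_iff (hL : IsFieldSub L) (hKL : K ≤ L) {J : Ideal ↥K} (hJ : J ≠ ⊥)
    (r : ↥(ringR K M)) :
    r ∈ J.map (Subring.inclusion (K_le_ringR K M)) ↔
      ∃ j : ↥K, j ∈ J ∧ ∃ m ∈ M, (r : T) = (j : T) + m := by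
  constructor
  · intro hr
    replace hr : r ∈ Ideal.span ((Subring.inclusion (K_le_ringR K M)) '' (J : Set ↥K)) := hr
    induction hr using Submodule.span_induction with
    | mem z hz =>
        obtain ⟨j, hj, rfl⟩ := hz
        exact ⟨j, hj, 0, M.zero_mem, by rw [incl_coe, add_zero]⟩
    | zero => exact ⟨0, J.zero_mem, 0, M.zero_mem, by simp⟩
    | add a b _ _ ha hb =>
        obtain ⟨j₁, hj₁, m₁, hm₁, h₁⟩ := ha
        obtain ⟨j₂, hj₂, m₂, hm₂, h₂⟩ := hb
        refine ⟨j₁ + j₂, J.add_mem hj₁ hj₂, m₁ + m₂, M.add_mem hm₁ hm₂, ?_⟩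
        push_cast
        rw [h₁, h₂]; ring
    | smul a x _ hx =>
        obtain ⟨j, hj, m, hm, hxeq⟩ := hx
        obtain ⟨k, hk, μ, hμ, ha⟩ := a.2
        refine ⟨⟨k, hk⟩ * j, J.mul_mem_left _ hj, k * m + μ * (j : T) + μ * m,
          M.add_mem (M.add_mem (M.mul_mem_left _ hm) (M.mul_mem_right _ hμ))
            (M.mul_mem_left _ hm), ?_⟩
        have : ((a • x : ↥(ringR K M)) : T) = (a : T) * (x : T) := rfl
        rw [this, ha, hxeq]
        push_cast
        ring
  · rintro ⟨j, hj, m, hm, hr⟩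
    obtain ⟨j₀, hj₀, hj₀0⟩ := Submodule.exists_mem_ne_zero_of_ne_bot hJ
    have hj₀T : (j₀ : T) ≠ 0 := fun h => hj₀0 (Subtype.ext h)
    obtain ⟨m', hm', hmm'⟩ := M_div hL (hKL j₀.2) hj₀T hm
    have h1 : Subring.inclusion (K_le_ringR K M) j ∈ J.map (Subring.inclusion (K_le_ringR K M)) :=
      Ideal.mem_map_of_mem _ hj
    have h2 : (⟨m', M_le_R m' hm'⟩ : ↥(ringR K M)) * Subring.inclusion (K_le_ringR K M) j₀ ∈
        J.map (Subring.inclusion (K_le_ringR K M)) :=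
      Ideal.mul_mem_left _ _ (Ideal.mem_map_of_mem _ hj₀)
    have : r = Subring.inclusion (K_le_ringR K M) j +
        (⟨m', M_le_R m' hm'⟩ : ↥(ringR K M)) * Subring.inclusion (K_le_ringR K M) j₀ := by
      apply Subtype.ext
      push_cast [incl_coe]
      rw [hr, hmm']
      ring
    rw [this]
    exact Ideal.add_mem _ h1 h2

/-- Multiplying the extension of `I` to `T` by an element of `M` lands in the image of `I`. -/
lemma map_subtype_mul_M {I : Ideal ↥(ringR K M)} {z : T}
    (hz : z ∈ I.map (ringR K M).subtype) {m : T} (hm : m ∈ M) :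
    z * m ∈ (ringR K M).subtype '' (I : Set ↥(ringR K M)) := by
  have hz' : z ∈ Ideal.span ((ringR K M).subtype '' (I : Set ↥(ringR K M))) := hz
  clear hz
  induction hz' using Submodule.span_induction generalizing m with
  | mem z hz =>
      obtain ⟨i, hi, rfl⟩ := hz
      exact ⟨i * ⟨m, M_le_R m hm⟩, I.mul_mem_right _ hi, rfl⟩
  | zero => exact ⟨0, I.zero_mem, by simp⟩
  | add a b _ _ ha hb =>
      obtain ⟨x₁, hx₁, h₁⟩ := ha hm
      obtain ⟨x₂, hx₂, h₂⟩ := hb hm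
      refine ⟨x₁ + x₂, I.add_mem hx₁ hx₂, ?_⟩
      rw [RingHom.map_add, h₁, h₂]; ring
  | smul a x _ hx =>
      obtain ⟨x', hx', h'⟩ := hx (M.mul_mem_left (a : T) hm)
      refine ⟨x', hx', ?_⟩
      rw [h', smul_eq_mul]; ring

end DMHelpers2
section KPrufer
set_option synthInstance.maxHeartbeats 1000000
set_option maxHeartbeats 2000000

open FractionalIdeal

variable {T : Type*} [CommRing T] [IsDomain T] {L K : Subring T} {M : Ideal T}

/-- If `R = K + M` is Prüfer, nonzero finitely generated ideals of `K` are invertible. -/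
lemma K_unit (hL : IsFieldSub L) (hLM : DirectSumDecomp L M) (hKL : K ≤ L)
    (hpruf : IsPruferDomain ↥(ringR K M)) (J : Ideal ↥K) (hJ0 : J ≠ ⊥) (hfg : J.FG) :
    IsUnit (J : FractionalIdeal (↥K)⁰ (FractionRing ↥K)) := by
  classical
  set R := ↥(ringR K M)
  set f : ↥K →+* R := Subring.inclusion (K_le_ringR K M) with hf
  obtain ⟨j₀, hj₀, hj₀0⟩ := Submodule.exists_mem_ne_zero_of_ne_bot hJ0
  set mapJ : Ideal R := J.map f with hmapJ
  have hmapJne : mapJ ≠ ⊥ := by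
    rw [Submodule.ne_bot_iff]
    refine ⟨f j₀, Ideal.mem_map_of_mem _ hj₀, fun h => hj₀0 (incl_injective (K_le_ringR K M) ?_)⟩
    rw [h, _root_.map_zero]
  have hGm : IsUnit (mapJ : FractionalIdeal R⁰ (FractionRing R)) :=
    hpruf mapJ hmapJne (Ideal.FG.map hfg f)
  set Ginv : FractionalIdeal R⁰ (FractionRing R) := ↑(hGm.unit⁻¹) with hGinv
  have h1 : (mapJ : FractionalIdeal R⁰ (FractionRing R)) * Ginv = 1 := by
    rw [hGinv]
    have h := Units.mul_inv hGm.unit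
    rw [hGm.unit_spec] at h
    exact_mod_cast h
  set W : Ideal R := (Ideal.span {f j₀}).colon mapJ with hW
  -- step 1: multiplying Ginv by f j₀ lands in W
  have h2 : ∀ q ∈ Ginv, algebraMap R (FractionRing R) (f j₀) * q ∈
      ((W : FractionalIdeal R⁰ (FractionRing R))) := by
    intro q hq
    have hj₀G : algebraMap R (FractionRing R) (f j₀) ∈
        (mapJ : FractionalIdeal R⁰ (FractionRing R)) :=
      mem_coeIdeal_of_mem _ (Ideal.mem_map_of_mem _ hj₀)
    have hprod := mul_mem_mul hj₀G hq
    rw [h1] at hprod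
    obtain ⟨w, hw⟩ := (mem_one_iff _).mp hprod
    rw [← hw]
    refine mem_coeIdeal_of_mem _ ?_
    rw [hW, Submodule.mem_colon]
    intro p hp
    have hpG : algebraMap R (FractionRing R) p ∈
        (mapJ : FractionalIdeal R⁰ (FractionRing R)) := mem_coeIdeal_of_mem _ hp
    have hpq := mul_mem_mul hpG hq
    rw [h1] at hpq
    obtain ⟨z, hz⟩ := (mem_one_iff _).mp hpq
    have key : algebraMap R (FractionRing R) (w * p) =
        algebraMap R (FractionRing R) (f j₀ * z) := by
      rw [_root_.map_mul, _root_.map_mul, hw, hz]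
      ring
    have := IsFractionRing.injective R (FractionRing R) key
    rw [smul_eq_mul, this]
    exact Ideal.mem_span_singleton'.mpr ⟨z, by ring⟩
  -- step 2
  have h3 : spanSingleton R⁰ (algebraMap R (FractionRing R) (f j₀)) * Ginv ≤
      ((W : FractionalIdeal R⁰ (FractionRing R))) := by
    rw [mul_le]
    intro i hi q hq
    obtain ⟨z, rfl⟩ := (mem_spanSingleton _).mp hi
    rw [smul_mul_assoc, ← mem_coe]
    exact Submodule.smul_mem _ _ (mem_coe.mpr (h2 q hq))
  have h4 : Ideal.span {f j₀} ≤ mapJ * W := by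
    rw [← coeIdeal_le_coeIdeal (FractionRing R), coeIdeal_mul, coeIdeal_span_singleton]
    have e1 : (mapJ : FractionalIdeal R⁰ (FractionRing R)) *
        (spanSingleton R⁰ (algebraMap R (FractionRing R) (f j₀)) * Ginv) =
        spanSingleton R⁰ (algebraMap R (FractionRing R) (f j₀)) := by
      rw [← mul_assoc, mul_comm (mapJ : FractionalIdeal R⁰ (FractionRing R)), mul_assoc,
        h1, mul_one]
    calc spanSingleton R⁰ (algebraMap R (FractionRing R) (f j₀))
        = (mapJ : FractionalIdeal R⁰ (FractionRing R)) *
          (spanSingleton R⁰ (algebraMap R (FractionRing R) (f j₀)) * Ginv) := e1.symm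
      _ ≤ (mapJ : FractionalIdeal R⁰ (FractionRing R)) *
          (W : FractionalIdeal R⁰ (FractionRing R)) := mul_right_mono h3
  have fj₀mem : f j₀ ∈ mapJ * W := h4 (Ideal.mem_span_singleton_self _)
  -- step 3: descend to K
  set WK : Ideal ↥K := (Ideal.span {j₀}).colon J with hWK
  have hPmain : ∃ p ∈ J * WK, ∃ m ∈ M, ((f j₀ : R) : T) = (p : T) + m := by
    refine Submodule.mul_induction_on fj₀mem ?_ ?_
    · intro u' hu' w hw
      obtain ⟨j, hj, m_u, hm_u, hujm⟩ := (mem_map_inclusion_iff hL hKL hJ0 u').mp hu'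
      obtain ⟨k, hk, m_w, hm_w, hw_eq⟩ := w.2
      have hkW : (⟨k, hk⟩ : ↥K) ∈ WK := by
        rw [hWK, Submodule.mem_colon]
        intro j' hj'
        have hfj' : f j' ∈ mapJ := Ideal.mem_map_of_mem _ hj'
        have hcolon := Submodule.mem_colon.mp hw _ hfj'
        rw [smul_eq_mul] at hcolon
        obtain ⟨c, hc⟩ := Ideal.mem_span_singleton'.mp hcolon
        obtain ⟨ck, hck, cm, hcm, hc_eq⟩ := c.2
        have hcT : (c : T) * (j₀ : T) = (w : T) * (j' : T) := by
          have := congrArg (fun x : R => (x : T)) hc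
          rw [hf] at this
          push_cast at this
          exact this
        have hdec := decomp_unique hLM (L.mul_mem (hKL hck) (hKL j₀.2))
          (M.mul_mem_right (j₀ : T) hcm) (L.mul_mem (hKL hk) (hKL j'.2))
          (M.mul_mem_right (j' : T) hm_w)
          (by rw [hc_eq, hw_eq] at hcT; linear_combination hcT)
        rw [smul_eq_mul]
        refine Ideal.mem_span_singleton'.mpr ⟨⟨ck, hck⟩, Subtype.ext ?_⟩
        push_cast
        linear_combination hdec.1
      refine ⟨j * ⟨k, hk⟩, Ideal.mul_mem_mul hj hkW,
        (j : T) * m_w + m_u * k + m_u * m_w,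
        M.add_mem (M.add_mem (M.mul_mem_left _ hm_w) (M.mul_mem_right _ hm_u))
          (M.mul_mem_right _ hm_u), ?_⟩
      have : ((u' * w : R) : T) = (u' : T) * (w : T) := rfl
      rw [this, hujm, hw_eq]
      push_cast
      ring
    · rintro x y ⟨p₁, hp₁, m₁, hm₁, e₁⟩ ⟨p₂, hp₂, m₂, hm₂, e₂⟩
      refine ⟨p₁ + p₂, Ideal.add_mem _ hp₁ hp₂, m₁ + m₂, M.add_mem hm₁ hm₂, ?_⟩
      have : ((x + y : R) : T) = (x : T) + (y : T) := rfl
      rw [this, e₁, e₂]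
      push_cast
      ring
  obtain ⟨p, hp, m, hm, hpm⟩ := hPmain
  have hj₀mem : j₀ ∈ J * WK := by
    have hj₀T : ((f j₀ : R) : T) = (j₀ : T) := incl_coe _ _
    have hdec := decomp_unique hLM (hKL j₀.2) M.zero_mem (hKL p.2) hm
      (by rw [add_zero, ← hj₀T, hpm])
    have : j₀ = p := Subtype.ext hdec.1
    rw [this]; exact hp
  have hspan_eq : J * WK = Ideal.span {j₀} := by
    apply le_antisymm
    · refine Ideal.mul_le.mpr fun a ha b hb => ?_
      have := Submodule.mem_colon.mp hb a ha
      rw [smul_eq_mul] at this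
      rw [mul_comm]
      exact this
    · exact (Ideal.span_singleton_le_iff_mem _).mpr hj₀mem
  have halg : algebraMap (↥K) (FractionRing ↥K) j₀ ≠ 0 := fun h =>
    hj₀0 ((IsFractionRing.injective (↥K) (FractionRing ↥K)) (by simpa using h))
  have hkey : (J : FractionalIdeal (↥K)⁰ (FractionRing ↥K)) * (WK : _) =
      spanSingleton (↥K)⁰ (algebraMap (↥K) (FractionRing ↥K) j₀) := by
    rw [← coeIdeal_mul, hspan_eq, coeIdeal_span_singleton]
  have hunit : IsUnit (spanSingleton (↥K)⁰ (algebraMap (↥K) (FractionRing ↥K) j₀)) :=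
    ⟨toPrincipalIdeal _ _ (Units.mk0 _ halg), by rw [coe_toPrincipalIdeal]; rfl⟩
  rw [← hkey] at hunit
  exact isUnit_of_mul_isUnit_left hunit

end KPrufer
section AlphaBeta

open FractionalIdeal

set_option synthInstance.maxHeartbeats 1000000
set_option maxHeartbeats 2000000

variable {T : Type*} [CommRing T] [IsDomain T] {L K : Subring T} {M : Ideal T}

lemma alpha_inj (hL : IsFieldSub L) (hLM : DirectSumDecomp L M) (hKL : K ≤ L) :
    Function.Injective
      (classMap (Subring.inclusion (K_le_ringR K M)) (incl_injective (K_le_ringR K M))) := by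
  set f : ↥K →+* ↥(ringR K M) := Subring.inclusion (K_le_ringR K M) with hfdef
  set hfinj := incl_injective (K_le_ringR K M)
  rw [injective_iff_map_eq_one]
  intro c hc
  obtain ⟨J, hu, hJ0, rfl⟩ := exists_integral_rep c
  rw [classMap_mk] at hc
  have hval : ((Units.map (extHom f hfinj) hu.unit :
        (FractionalIdeal (↥(ringR K M))⁰ (FractionRing ↥(ringR K M)))ˣ) :
        FractionalIdeal (↥(ringR K M))⁰ (FractionRing ↥(ringR K M))) =
      ((J.map f : Ideal ↥(ringR K M)) : FractionalIdeal _ _) := by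
    show extHom f hfinj (hu.unit : FractionalIdeal (↥K)⁰ (FractionRing ↥K)) = _
    rw [hu.unit_spec, extHom_coeIdeal]
  obtain ⟨x, hx0, hxspan⟩ := (ClassGroup.mk_eq_one_of_coe_ideal hval).mp hc
  have hxmem : x ∈ J.map f := by rw [hxspan]; exact Ideal.mem_span_singleton_self x
  obtain ⟨ja, hja, m₁, hm₁, hxT⟩ := (mem_map_inclusion_iff hL hKL hJ0 x).mp hxmem
  have hJspan : J = Ideal.span {ja} := by
    apply le_antisymm
    · intro j hj
      have hfj : f j ∈ Ideal.span {x} := by rw [← hxspan]; exact Ideal.mem_map_of_mem f hj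
      obtain ⟨s, hs⟩ := Ideal.mem_span_singleton'.mp hfj
      obtain ⟨k, hk, μ, hμ, hsT⟩ := s.2
      have hT : (s : T) * (x : T) = (j : T) := congrArg (fun z : ↥(ringR K M) => (z : T)) hs
      have hdec := decomp_unique hLM (L.mul_mem (hKL hk) (hKL ja.2))
        (M.add_mem (M.add_mem (M.mul_mem_left k hm₁) (M.mul_mem_right (ja : T) hμ))
          (M.mul_mem_left μ hm₁))
        (hKL j.2) M.zero_mem
        (by rw [hsT, hxT] at hT; linear_combination hT)
      refine Ideal.mem_span_singleton'.mpr ⟨⟨k, hk⟩, Subtype.ext ?_⟩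
      push_cast
      linear_combination hdec.1
    · exact (Ideal.span_singleton_le_iff_mem _).mpr hja
  have hja0 : ja ≠ 0 := by
    rintro rfl
    rw [hJspan] at hJ0
    simp at hJ0
  exact (ClassGroup.mk_eq_one_of_coe_ideal hu.unit_spec).mpr ⟨ja, hja0, hJspan⟩

end AlphaBeta
section Beta

open FractionalIdeal

set_option synthInstance.maxHeartbeats 1000000
set_option maxHeartbeats 2000000

variable {T : Type*} [CommRing T] [IsDomain T] {L K : Subring T} {M : Ideal T}

lemma subtype_inj : Function.Injective (ringR K M).subtype := Subtype.coe_injective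

lemma beta_surj (hL : IsFieldSub L) (hLM : DirectSumDecomp L M) (hKL : K ≤ L)
    (hfrac : IsFracOf K L) (hpruf : IsPruferDomain ↥(ringR K M)) :
    Function.Surjective (classMap (ringR K M).subtype (subtype_inj (K := K) (M := M))) := by
  classical
  intro c
  obtain ⟨A, huA, hA0, rfl⟩ := exists_integral_rep c
  have hAfg : A.FG := Ideal.fg_of_isUnit (IsFractionRing.injective T (FractionRing T)) A huA
  obtain ⟨S, hS⟩ := hAfg
  have hball : ∀ S₀ : Finset T, ∃ b, b ∈ K ∧ b ≠ 0 ∧ ∀ t ∈ S₀, b * t ∈ ringR K M := by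
    intro S₀
    induction S₀ using Finset.induction with
    | empty => exact ⟨1, K.one_mem, one_ne_zero, by simp⟩
    | insert t S' hnotmem ih =>
        obtain ⟨b₁, hb₁K, hb₁0, hb₁⟩ := ih
        obtain ⟨b₂, hb₂K, hb₂0, hb₂⟩ := exists_K_denom hLM hfrac t
        refine ⟨b₂ * b₁, K.mul_mem hb₂K hb₁K, mul_ne_zero hb₂0 hb₁0, ?_⟩
        intro t' ht'
        rcases Finset.mem_insert.mp ht' with rfl | ht'
        · have he : b₂ * b₁ * t' = b₁ * (b₂ * t') := by ring
          rw [he]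
          exact (ringR K M).mul_mem (K_le_ringR K M hb₁K) hb₂
        · have he : b₂ * b₁ * t' = b₂ * (b₁ * t') := by ring
          rw [he]
          exact (ringR K M).mul_mem (K_le_ringR K M hb₂K) (hb₁ t' ht')
  obtain ⟨b, hbK, hb0, hbS⟩ := hball S
  set gen : {t // t ∈ S} → ↥(ringR K M) := fun t => ⟨b * t, hbS t t.2⟩ with hgen
  set I : Ideal ↥(ringR K M) := Ideal.span (Set.range gen) with hI
  have hIfg : I.FG := Submodule.fg_span (Set.finite_range gen)
  have htS : ∃ t ∈ S, t ≠ (0 : T) := by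
    by_contra h
    push_neg at h
    apply hA0
    rw [← hS, ← Ideal.span_singleton_eq_bot.mpr rfl]
    apply le_antisymm
    · rw [Ideal.span_le]
      intro t ht
      rw [h t ht]
      exact Ideal.subset_span rfl
    · rw [Ideal.span_le]
      rintro z rfl
      exact (Ideal.span (S : Set T)).zero_mem
  obtain ⟨t₁, ht₁S, ht₁0⟩ := htS
  have hIne : I ≠ ⊥ := by
    rw [Submodule.ne_bot_iff]
    refine ⟨gen ⟨t₁, ht₁S⟩, Ideal.subset_span (Set.mem_range_self _), fun h => ?_⟩
    have : b * t₁ = 0 := congrArg (fun z : ↥(ringR K M) => (z : T)) h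
    exact (mul_ne_zero hb0 ht₁0) this
  have hIu := hpruf I hIne hIfg
  refine ⟨ClassGroup.mk (FractionRing ↥(ringR K M)) hIu.unit, ?_⟩
  rw [classMap_mk]
  have hval : ((Units.map (extHom (ringR K M).subtype subtype_inj) hIu.unit :
        (FractionalIdeal T⁰ (FractionRing T))ˣ) : FractionalIdeal T⁰ (FractionRing T)) =
      ((I.map (ringR K M).subtype : Ideal T) : FractionalIdeal T⁰ (FractionRing T)) := by
    show extHom (ringR K M).subtype subtype_inj
      (hIu.unit : FractionalIdeal (↥(ringR K M))⁰ (FractionRing ↥(ringR K M))) = _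
    rw [hIu.unit_spec, extHom_coeIdeal]
  have hmap : I.map (ringR K M).subtype = Ideal.span {b} * A := by
    rw [hI, Ideal.map_span, ← hS, Ideal.span_mul_span']
    congr 1
    ext z
    constructor
    · rintro ⟨w, ⟨t, rfl⟩, rfl⟩
      exact ⟨b, rfl, t, t.2, rfl⟩
    · rintro ⟨v, hv, t, ht, rfl⟩
      rcases hv with rfl
      exact ⟨gen ⟨t, ht⟩, ⟨⟨t, ht⟩, rfl⟩, rfl⟩
  rw [ClassGroup.mk_eq_mk_of_coe_ideal hval huA.unit_spec]
  exact ⟨1, b, one_ne_zero, hb0, by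
    rw [hmap, Ideal.span_singleton_one, Ideal.top_mul]⟩

lemma beta_alpha (hL : IsFieldSub L) (hKL : K ≤ L) (c : ClassGroup ↥K) :
    classMap (ringR K M).subtype subtype_inj
      (classMap (Subring.inclusion (K_le_ringR K M)) (incl_injective (K_le_ringR K M)) c) = 1 := by
  obtain ⟨J, hu, hJ0, rfl⟩ := exists_integral_rep c
  rw [classMap_mk, classMap_mk]
  set f : ↥K →+* ↥(ringR K M) := Subring.inclusion (K_le_ringR K M) with hfdef
  have hval : ((Units.map (extHom (ringR K M).subtype subtype_inj)
        (Units.map (extHom f (incl_injective (K_le_ringR K M))) hu.unit) :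
        (FractionalIdeal T⁰ (FractionRing T))ˣ) : FractionalIdeal T⁰ (FractionRing T)) =
      (((J.map f).map (ringR K M).subtype : Ideal T) : FractionalIdeal T⁰ (FractionRing T)) := by
    show extHom (ringR K M).subtype subtype_inj
      (extHom f (incl_injective (K_le_ringR K M)) (hu.unit : FractionalIdeal _ _)) = _
    rw [hu.unit_spec, extHom_coeIdeal, extHom_coeIdeal]
  rw [ClassGroup.mk_eq_one_of_coe_ideal hval]
  refine ⟨1, one_ne_zero, ?_⟩
  rw [Ideal.span_singleton_one]
  obtain ⟨j₀, hj₀, hj₀0⟩ := Submodule.exists_mem_ne_zero_of_ne_bot hJ0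
  have hmem : (j₀ : T) ∈ (J.map f).map (ringR K M).subtype := by
    have := Ideal.mem_map_of_mem (ringR K M).subtype (Ideal.mem_map_of_mem f hj₀)
    exact this
  have hj₀T : (j₀ : T) ≠ 0 := fun h => hj₀0 (Subtype.ext h)
  obtain ⟨y, _, hy⟩ := hL (j₀ : T) (hKL j₀.2) hj₀T
  rw [Ideal.eq_top_iff_one]
  have : (1 : T) = y * (j₀ : T) := by rw [mul_comm, hy]
  rw [this]
  exact Ideal.mul_mem_left _ y hmem

end Beta
section KerRange

open FractionalIdeal

set_option synthInstance.maxHeartbeats 1000000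
set_option maxHeartbeats 2000000

variable {T : Type*} [CommRing T] [IsDomain T] {L K : Subring T} {M : Ideal T}

lemma ker_le_range (hL : IsFieldSub L) (hM : M.IsMaximal) (hLM : DirectSumDecomp L M)
    (hKL : K ≤ L) (hfrac : IsFracOf K L) (hpruf : IsPruferDomain ↥(ringR K M))
    (c : ClassGroup ↥(ringR K M))
    (hc : classMap (ringR K M).subtype subtype_inj c = 1) :
    ∃ c' : ClassGroup ↥K,
      classMap (Subring.inclusion (K_le_ringR K M)) (incl_injective (K_le_ringR K M)) c' = c := by
  classical
  obtain ⟨I₀, huI, hI0, rfl⟩ := exists_integral_rep c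
  rw [classMap_mk] at hc
  have hval : ((Units.map (extHom (ringR K M).subtype subtype_inj) huI.unit :
        (FractionalIdeal T⁰ (FractionRing T))ˣ) : FractionalIdeal T⁰ (FractionRing T)) =
      ((I₀.map (ringR K M).subtype : Ideal T) : FractionalIdeal T⁰ (FractionRing T)) := by
    show extHom (ringR K M).subtype subtype_inj
      (huI.unit : FractionalIdeal (↥(ringR K M))⁰ (FractionRing ↥(ringR K M))) = _
    rw [huI.unit_spec, extHom_coeIdeal]
  obtain ⟨t₀, ht₀0, ht₀span⟩ := (ClassGroup.mk_eq_one_of_coe_ideal hval).mp hc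
  have ht₀mem : t₀ ∈ I₀.map (ringR K M).subtype := by
    rw [ht₀span]; exact Ideal.mem_span_singleton_self _
  have hdec : ∀ r : ↥(ringR K M), r ∈ I₀ → ∃ l m, l ∈ L ∧ m ∈ M ∧
      (r : T) = t₀ * l + t₀ * m ∧
      t₀ * l ∈ (ringR K M).subtype '' (I₀ : Set ↥(ringR K M)) := by
    intro r hr
    have hrmem : (r : T) ∈ Ideal.span {t₀} := by
      rw [← ht₀span]; exact Ideal.mem_map_of_mem _ hr
    obtain ⟨t, ht⟩ := Ideal.mem_span_singleton'.mp hrmem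
    obtain ⟨l, hl, m, hm, htlm⟩ := hLM.1 t
    obtain ⟨i₁, hi₁, e₁⟩ := map_subtype_mul_M ht₀mem hm
    have e₁' : (i₁ : T) = t₀ * m := e₁
    refine ⟨l, m, hl, hm, by rw [← ht, htlm]; ring, ?_⟩
    refine ⟨r - i₁, I₀.sub_mem hr hi₁, ?_⟩
    have hsub : ((r - i₁ : ↥(ringR K M)) : T) = (r : T) - (i₁ : T) := rfl
    show ((r - i₁ : ↥(ringR K M)) : T) = t₀ * l
    rw [hsub, e₁', ← ht, htlm]; ring
  choose lf mf hlL hmM heq himg using hdec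
  have hIfg := Ideal.fg_of_isUnit
    (IsFractionRing.injective (↥(ringR K M)) (FractionRing ↥(ringR K M))) I₀ huI
  obtain ⟨S, hS⟩ := hIfg
  have hmemS : ∀ r : {x // x ∈ S}, (r : ↥(ringR K M)) ∈ I₀ := fun r => by
    rw [← hS]; exact Ideal.subset_span r.2
  -- common denominator
  choose af haf bf hbf hbf0 hlb using
    (fun r : {x // x ∈ S} => hfrac _ (hlL _ (hmemS r)))
  set d : T := ∏ r : {x // x ∈ S}, bf r with hd
  have hdK : d ∈ K := prod_mem (fun r _ => hbf r)
  have hd0 : d ≠ 0 := Finset.prod_ne_zero_iff.mpr (fun r _ => hbf0 r)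
  have hdl : ∀ r : {x // x ∈ S}, d * lf r (hmemS r) ∈ K := by
    intro r
    rw [hd, ← Finset.mul_prod_erase Finset.univ bf (Finset.mem_univ r)]
    have hre : (bf r * ∏ r' ∈ Finset.univ.erase r, bf r') * lf r (hmemS r)
        = (∏ r' ∈ Finset.univ.erase r, bf r') * (lf r (hmemS r) * bf r) := by ring
    rw [hre, hlb r]
    exact K.mul_mem (prod_mem fun r' _ => hbf r') (haf r)
  set genJ : {x // x ∈ S} → ↥K := fun r => ⟨d * lf r (hmemS r), hdl r⟩ with hgenJ
  set J : Ideal ↥K := Ideal.span (Set.range genJ) with hJdef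
  have hJfg : J.FG := Submodule.fg_span (Set.finite_range genJ)
  -- F1
  have hF1 : ∀ j ∈ J, ∃ l, l ∈ L ∧ (j : T) = d * l ∧
      t₀ * l ∈ (ringR K M).subtype '' (I₀ : Set ↥(ringR K M)) := by
    intro j hj
    rw [hJdef] at hj
    induction hj using Submodule.span_induction with
    | mem z hz =>
        obtain ⟨r, rfl⟩ := hz
        exact ⟨lf r (hmemS r), hlL _ _, rfl, himg _ _⟩
    | zero => exact ⟨0, L.zero_mem, by simp, ⟨0, I₀.zero_mem, by simp⟩⟩
    | add a b _ _ ha hb =>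
        obtain ⟨l₁, hl₁, e₁, i₁, hi₁, f₁⟩ := ha
        obtain ⟨l₂, hl₂, e₂, i₂, hi₂, f₂⟩ := hb
        have f₁' : (i₁ : T) = t₀ * l₁ := f₁
        have f₂' : (i₂ : T) = t₀ * l₂ := f₂
        refine ⟨l₁ + l₂, L.add_mem hl₁ hl₂, by push_cast; rw [e₁, e₂]; ring,
          ⟨i₁ + i₂, I₀.add_mem hi₁ hi₂, ?_⟩⟩
        show ((i₁ + i₂ : ↥(ringR K M)) : T) = t₀ * (l₁ + l₂)
        push_cast
        rw [f₁', f₂']; ring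
    | smul k z _ hz =>
        obtain ⟨l', hl', e', i', hi', f'⟩ := hz
        have f'' : (i' : T) = t₀ * l' := f'
        refine ⟨(k : T) * l', L.mul_mem (hKL k.2) hl', ?_, ?_⟩
        · have hco : ((k • z : ↥K) : T) = (k : T) * (z : T) := rfl
          rw [hco, e']; ring
        · refine ⟨Subring.inclusion (K_le_ringR K M) k * i', I₀.mul_mem_left _ hi', ?_⟩
          show ((Subring.inclusion (K_le_ringR K M) k * i' : ↥(ringR K M)) : T)
            = t₀ * ((k : T) * l')
          have hco : ((Subring.inclusion (K_le_ringR K M) k * i' : ↥(ringR K M)) : T)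
              = (k : T) * (i' : T) := rfl
          rw [hco, f'']; ring
  -- J ≠ ⊥
  have hlne : ∃ r : {x // x ∈ S}, lf r (hmemS r) ≠ 0 := by
    by_contra h
    push_neg at h
    set MT : Ideal T :=
      { carrier := {x | ∃ m ∈ M, x = t₀ * m}
        add_mem' := by
          rintro a b ⟨m₁, hm₁, rfl⟩ ⟨m₂, hm₂, rfl⟩
          exact ⟨m₁ + m₂, M.add_mem hm₁ hm₂, by ring⟩
        zero_mem' := ⟨0, M.zero_mem, by ring⟩
        smul_mem' := by
          rintro t x ⟨m, hm, rfl⟩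
          exact ⟨t * m, M.mul_mem_left t hm, by rw [smul_eq_mul]; ring⟩ } with hMT
    have hle : I₀.map (ringR K M).subtype ≤ MT := by
      rw [← hS, Ideal.map_span, Ideal.span_le]
      rintro z ⟨r, hr, rfl⟩
      have hrI : (r : ↥(ringR K M)) ∈ I₀ := hmemS ⟨r, hr⟩
      refine ⟨mf r hrI, hmM r hrI, ?_⟩
      show ((r : ↥(ringR K M)) : T) = t₀ * mf r hrI
      rw [heq r hrI, h ⟨r, hr⟩]; ring
    obtain ⟨mhat, hmhat, e⟩ := hle ht₀mem
    have h1 : (1 : T) = mhat := mul_left_cancel₀ ht₀0 (by rw [mul_one, ← e])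
    exact hM.ne_top ((Ideal.eq_top_iff_one _).mpr (by rwa [← h1] at hmhat))
  obtain ⟨r₀, hr₀⟩ := hlne
  have hJne : J ≠ ⊥ := by
    rw [Submodule.ne_bot_iff]
    refine ⟨genJ r₀, Ideal.subset_span (Set.mem_range_self _), fun hh => hr₀ ?_⟩
    have h0 : d * lf r₀ (hmemS r₀) = 0 := congrArg (fun z : ↥K => (z : T)) hh
    rcases mul_eq_zero.mp h0 with h' | h'
    · exact absurd h' hd0
    · exact h'
  have hJu := K_unit hL hLM hKL hpruf J hJne hJfg
  -- F2'
  have hF2 : ∀ i ∈ I₀, ∃ jj ∈ J, ∃ m ∈ M, d * (i : T) = t₀ * ((jj : T) + d * m) := by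
    intro i hi
    rw [← hS] at hi
    induction hi using Submodule.span_induction with
    | mem z hz =>
        have hzI : z ∈ I₀ := by rw [← hS]; exact Ideal.subset_span hz
        refine ⟨genJ ⟨z, hz⟩, Ideal.subset_span (Set.mem_range_self _), mf z hzI,
          hmM z hzI, ?_⟩
        rw [heq z hzI]
        show d * (t₀ * lf z hzI + t₀ * mf z hzI)
          = t₀ * (d * lf z (hmemS ⟨z, hz⟩) + d * mf z hzI)
        ring
    | zero => exact ⟨0, J.zero_mem, 0, M.zero_mem, by simp⟩
    | add x y _ _ hxP hyP =>
        obtain ⟨jj₁, hjj₁, m₁, hm₁, e₁⟩ := hxP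
        obtain ⟨jj₂, hjj₂, m₂, hm₂, e₂⟩ := hyP
        refine ⟨jj₁ + jj₂, J.add_mem hjj₁ hjj₂, m₁ + m₂, M.add_mem hm₁ hm₂, ?_⟩
        have hco : ((x + y : ↥(ringR K M)) : T) = (x : T) + (y : T) := rfl
        rw [hco]
        push_cast
        linear_combination e₁ + e₂
    | smul a z _ hzP =>
        obtain ⟨jj, hjj, m, hm, e⟩ := hzP
        obtain ⟨k, hk, μ, hμ, ha⟩ := a.2
        obtain ⟨l', hl', ejj, _⟩ := hF1 jj hjj
        refine ⟨⟨k, hk⟩ * jj, J.mul_mem_left _ hjj, k * m + μ * l' + μ * m,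
          M.add_mem (M.add_mem (M.mul_mem_left k hm) (M.mul_mem_right l' hμ))
            (M.mul_mem_left μ hm), ?_⟩
        have hco : ((a • z : ↥(ringR K M)) : T) = (a : T) * (z : T) := rfl
        rw [hco, ha]
        push_cast
        linear_combination (k + μ) * e + μ * t₀ * ejj
  -- conclusion
  refine ⟨ClassGroup.mk (FractionRing ↥K) hJu.unit, ?_⟩
  rw [classMap_mk]
  have hval2 : ((Units.map (extHom (Subring.inclusion (K_le_ringR K M))
        (incl_injective (K_le_ringR K M))) hJu.unit :
        (FractionalIdeal (↥(ringR K M))⁰ (FractionRing ↥(ringR K M)))ˣ) :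
        FractionalIdeal (↥(ringR K M))⁰ (FractionRing ↥(ringR K M))) =
      ((J.map (Subring.inclusion (K_le_ringR K M)) : Ideal ↥(ringR K M)) :
        FractionalIdeal _ _) := by
    show extHom (Subring.inclusion (K_le_ringR K M)) (incl_injective (K_le_ringR K M))
      (hJu.unit : FractionalIdeal (↥K)⁰ (FractionRing ↥K)) = _
    rw [hJu.unit_spec, extHom_coeIdeal]
  rw [ClassGroup.mk_eq_mk_of_coe_ideal hval2 huI.unit_spec]
  obtain ⟨b, hbK, hb0, hbt₀⟩ := exists_K_denom hLM hfrac t₀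
  set x : ↥(ringR K M) := ⟨b * t₀, hbt₀⟩ with hx
  set y : ↥(ringR K M) := ⟨b * d, K_le_ringR K M (K.mul_mem hbK hdK)⟩ with hy
  have hx0 : x ≠ 0 := fun h =>
    mul_ne_zero hb0 ht₀0 (congrArg (fun z : ↥(ringR K M) => (z : T)) h)
  have hy0 : y ≠ 0 := fun h =>
    mul_ne_zero hb0 hd0 (congrArg (fun z : ↥(ringR K M) => (z : T)) h)
  refine ⟨x, y, hx0, hy0, le_antisymm ?_ ?_⟩
  · refine Ideal.mul_le.mpr fun r₁ hr₁ u hu => ?_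
    obtain ⟨c₁, hc₁⟩ := Ideal.mem_span_singleton'.mp hr₁
    obtain ⟨j, hj, m_u, hm_u, hu_eq⟩ := (mem_map_inclusion_iff hL hKL hJne u).mp hu
    obtain ⟨l', hl', ej, i₁, hi₁, f₁⟩ := hF1 j hj
    have f₁' : (i₁ : T) = t₀ * l' := f₁
    obtain ⟨m'', hm'', hm_u_eq⟩ := M_div hL (hKL hdK) hd0 hm_u
    obtain ⟨i₂, hi₂, f₂⟩ := map_subtype_mul_M ht₀mem hm''
    have f₂' : (i₂ : T) = t₀ * m'' := f₂
    have hkey : x * u = y * (i₁ + i₂) := by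
      apply Subtype.ext
      show (b * t₀) * (u : T) = (b * d) * ((i₁ + i₂ : ↥(ringR K M)) : T)
      have hco : ((i₁ + i₂ : ↥(ringR K M)) : T) = (i₁ : T) + (i₂ : T) := rfl
      rw [hco, hu_eq, ej, hm_u_eq, f₁', f₂']
      ring
    have hru : r₁ * u = c₁ * (x * u) := by rw [← hc₁]; ring
    rw [hru, hkey]
    exact Ideal.mul_mem_left _ c₁
      (Ideal.mul_mem_mul (Ideal.mem_span_singleton_self y) (I₀.add_mem hi₁ hi₂))
  · refine Ideal.mul_le.mpr fun r₂ hr₂ i hi => ?_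
    obtain ⟨c₂, hc₂⟩ := Ideal.mem_span_singleton'.mp hr₂
    obtain ⟨jj, hjj, m, hm, e⟩ := hF2 i hi
    set u : ↥(ringR K M) := ⟨(jj : T) + d * m, jj, jj.2, d * m, M.mul_mem_left d hm, rfl⟩
      with hu
    have humem : u ∈ J.map (Subring.inclusion (K_le_ringR K M)) :=
      (mem_map_inclusion_iff hL hKL hJne u).mpr ⟨jj, hjj, d * m, M.mul_mem_left d hm, rfl⟩
    have hkey : y * i = x * u := by
      apply Subtype.ext
      show (b * d) * (i : T) = (b * t₀) * ((jj : T) + d * m)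
      linear_combination b * e
    have hri : r₂ * i = c₂ * (y * i) := by rw [← hc₂]; ring
    rw [hri, hkey]
    exact Ideal.mul_mem_left _ c₂
      (Ideal.mul_mem_mul (Ideal.mem_span_singleton_self x) humem)

end KerRange


set_option synthInstance.maxHeartbeats 1000000 in
set_option maxHeartbeats 2000000 in
theorem stmt_13 {T : Type*} [CommRing T] [IsDomain T]
    (L : Subring T) (M : Ideal T) (K : Subring T)
    (hL : IsFieldSub L) (hM : M.IsMaximal) (hM0 : M ≠ ⊥)
    (hLM : DirectSumDecomp L M) (hKL : K ≤ L) (hKne : K ≠ L)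
    (hfrac : IsFracOf K L) (hpruf : IsPruferDomain ↥(ringR K M)) :
    ∃ (α : ClassGroup ↥K →* ClassGroup ↥(ringR K M))
      (β : ClassGroup ↥(ringR K M) →* ClassGroup T),
      Function.Injective α ∧ Function.Surjective β ∧
      MonoidHom.range α = MonoidHom.ker β ∧
      (∀ (J : Ideal ↥K)
        (hJ : IsUnit (J : FractionalIdeal (nonZeroDivisors ↥K) (FractionRing ↥K)))
        (hJR : IsUnit ((J.map (Subring.inclusion (K_le_ringR K M)) : Ideal ↥(ringR K M)) :
          FractionalIdeal (nonZeroDivisors ↥(ringR K M)) (FractionRing ↥(ringR K M)))),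
        α (ClassGroup.mk (FractionRing ↥K) hJ.unit) =
          ClassGroup.mk (FractionRing ↥(ringR K M)) hJR.unit) ∧
      (∀ (I : Ideal ↥(ringR K M))
        (hI : IsUnit (I : FractionalIdeal (nonZeroDivisors ↥(ringR K M))
          (FractionRing ↥(ringR K M))))
        (hIT : IsUnit ((I.map (ringR K M).subtype : Ideal T) :
          FractionalIdeal (nonZeroDivisors T) (FractionRing T))),
        β (ClassGroup.mk (FractionRing ↥(ringR K M)) hI.unit) =
          ClassGroup.mk (FractionRing T) hIT.unit) := by
  refine ⟨classMap (Subring.inclusion (K_le_ringR K M)) (incl_injective (K_le_ringR K M)),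
    classMap (ringR K M).subtype subtype_inj,
    alpha_inj hL hLM hKL, beta_surj hL hLM hKL hfrac hpruf, ?_, ?_, ?_⟩
  · ext c
    simp only [MonoidHom.mem_range, MonoidHom.mem_ker]
    constructor
    · rintro ⟨c', rfl⟩
      exact beta_alpha hL hKL c'
    · intro hc
      exact ker_le_range hL hM hLM hKL hfrac hpruf c hc
  · intro J hJ hJR
    rw [classMap_mk]
    congr 1
    apply Units.ext
    show extHom (Subring.inclusion (K_le_ringR K M)) (incl_injective (K_le_ringR K M))
      (hJ.unit : FractionalIdeal (↥K)⁰ (FractionRing ↥K)) = _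
    rw [hJ.unit_spec, extHom_coeIdeal, hJR.unit_spec]
  · intro I hI hIT
    rw [classMap_mk]
    congr 1
    apply Units.ext
    show extHom (ringR K M).subtype subtype_inj
      (hI.unit : FractionalIdeal (↥(ringR K M))⁰ (FractionRing ↥(ringR K M))) = _
    rw [hI.unit_spec, extHom_coeIdeal, hIT.unit_spec]
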